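/- Let X₁,…,X_s be elements of an associative ring. Let Φ_{s s₁} be the set of permutations π of {1,…,s} with π(1) = s₁ such that for every 1 ≤ l ≤ s the image set {π(1),…,π(l)} consists of consecutive integers. Then Σ_{s₁=1}^{s} Σ_{π ∈ Φ_{s s₁}} (−1)^{s₁−1} X_{π^{−1}(1)} X_{π^{−1}(2)} ⋯ X_{π^{−1}(s)} = [⋯[[X₁, X₂], X₃], …, X_s], the left-normed iterated commutator. -/

import Mathlib

open scoped Classical

/-- A permutation `π` of `{1,…,s}` is connected if for every `l`, the image set
`{π(1),…,π(l)}` is a set of consecutive integers. -/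
def IsConnectedPerm {s : ℕ} (π : Equiv.Perm (Fin s)) : Prop :=
  ∀ l : Fin s, ∃ c : ℕ,
    (Finset.univ.filter fun i : Fin s => i ≤ l).image (fun i => (π i : ℕ)) =
      Finset.Ico c (c + (l : ℕ) + 1)

/-- The left-normed iterated commutator `[⋯[[X₁,X₂],X₃],…,X_s]` of a nonempty list. -/
def iteratedCommutator {R : Type*} [Ring R] : List R → R
  | [] => 0
  | x :: xs => xs.foldl (fun acc y => acc * y - y * acc) x

section Helpers

variable {m : ℕ}

def ext1 (σ : Equiv.Perm (Fin m)) : Equiv.Perm (Fin (m+1)) where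
  toFun := Fin.lastCases (Fin.last m) (fun i => (σ i).castSucc)
  invFun := Fin.lastCases (Fin.last m) (fun i => (σ.symm i).castSucc)
  left_inv := by
    intro i
    induction i using Fin.lastCases with
    | last => simp
    | cast i => simp
  right_inv := by
    intro i
    induction i using Fin.lastCases with
    | last => simp
    | cast i => simp

def ext2 (σ : Equiv.Perm (Fin m)) : Equiv.Perm (Fin (m+1)) where
  toFun := Fin.lastCases 0 (fun i => (σ i).succ)
  invFun := Fin.cases (Fin.last m) (fun j => (σ.symm j).castSucc)
  left_inv := by
    intro i
    induction i using Fin.lastCases with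
    | last => simp
    | cast i => simp
  right_inv := by
    intro i
    induction i using Fin.cases with
    | zero => simp
    | succ i => simp

@[simp] lemma ext1_apply_last (σ : Equiv.Perm (Fin m)) : ext1 σ (Fin.last m) = Fin.last m := by simp [ext1, ext2]; try rfl
@[simp] lemma ext1_apply_castSucc (σ : Equiv.Perm (Fin m)) (i : Fin m) :
    ext1 σ i.castSucc = (σ i).castSucc := by simp [ext1, ext2]
@[simp] lemma ext1_symm_last (σ : Equiv.Perm (Fin m)) : (ext1 σ).symm (Fin.last m) = Fin.last m := by simp [ext1, ext2]; try rfl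
@[simp] lemma ext1_symm_castSucc (σ : Equiv.Perm (Fin m)) (i : Fin m) :
    (ext1 σ).symm i.castSucc = (σ.symm i).castSucc := by simp [ext1, ext2]
@[simp] lemma ext2_apply_last (σ : Equiv.Perm (Fin m)) : ext2 σ (Fin.last m) = 0 := by simp [ext1, ext2]; try rfl
@[simp] lemma ext2_apply_castSucc (σ : Equiv.Perm (Fin m)) (i : Fin m) :
    ext2 σ i.castSucc = (σ i).succ := by simp [ext1, ext2]
@[simp] lemma ext2_symm_zero (σ : Equiv.Perm (Fin m)) : (ext2 σ).symm 0 = Fin.last m := by simp [ext2]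
@[simp] lemma ext2_symm_succ (σ : Equiv.Perm (Fin m)) (j : Fin m) :
    (ext2 σ).symm j.succ = (σ.symm j).castSucc := by simp [ext2]

lemma img1 (σ : Equiv.Perm (Fin m)) (l : Fin m) :
    ((Finset.univ.filter fun i : Fin (m+1) => i ≤ l.castSucc).image fun i => ((ext1 σ) i : ℕ)) =
      (Finset.univ.filter fun i : Fin m => i ≤ l).image (fun i => (σ i : ℕ)) := by
  ext n
  simp only [Finset.mem_image, Finset.mem_filter, Finset.mem_univ, true_and]
  constructor
  · rintro ⟨i, hi, rfl⟩
    induction i using Fin.lastCases with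
    | last =>
      exfalso
      have := Fin.le_def.mp hi
      simp [Fin.val_last] at this
      have := l.isLt
      omega
    | cast i =>
      exact ⟨i, Fin.castSucc_le_castSucc_iff.mp hi, by simp⟩
  · rintro ⟨i, hi, rfl⟩
    exact ⟨i.castSucc, Fin.castSucc_le_castSucc_iff.mpr hi, by simp⟩

lemma img2 (σ : Equiv.Perm (Fin m)) (l : Fin m) :
    ((Finset.univ.filter fun i : Fin (m+1) => i ≤ l.castSucc).image fun i => ((ext2 σ) i : ℕ)) =
      ((Finset.univ.filter fun i : Fin m => i ≤ l).image (fun i => (σ i : ℕ))).image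
        (fun n => n + 1) := by
  rw [Finset.image_image]
  ext n
  simp only [Finset.mem_image, Finset.mem_filter, Finset.mem_univ, true_and, Function.comp]
  constructor
  · rintro ⟨i, hi, rfl⟩
    induction i using Fin.lastCases with
    | last =>
      exfalso
      have := Fin.le_def.mp hi
      simp [Fin.val_last] at this
      have := l.isLt
      omega
    | cast i =>
      exact ⟨i, Fin.castSucc_le_castSucc_iff.mp hi, by simp [Fin.val_succ]⟩
  · rintro ⟨i, hi, rfl⟩
    exact ⟨i.castSucc, Fin.castSucc_le_castSucc_iff.mpr hi, by simp [Fin.val_succ]⟩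

lemma img_univ (π : Equiv.Perm (Fin (m+1))) :
    ((Finset.univ.filter fun i : Fin (m+1) => i ≤ Fin.last m).image fun i => (π i : ℕ)) =
      Finset.Ico 0 (m+1) := by
  have : (Finset.univ.filter fun i : Fin (m+1) => i ≤ Fin.last m) = Finset.univ :=
    Finset.filter_true_of_mem (fun i _ => Fin.le_last i)
  rw [this]
  ext n
  simp only [Finset.mem_image, Finset.mem_univ, true_and, Finset.mem_Ico]
  constructor
  · rintro ⟨i, rfl⟩; exact ⟨Nat.zero_le _, (π i).isLt⟩
  · rintro ⟨-, hn⟩; exact ⟨π.symm ⟨n, hn⟩, by simp⟩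

lemma conn_ext1 (σ : Equiv.Perm (Fin m)) : IsConnectedPerm (ext1 σ) ↔ IsConnectedPerm σ := by
  constructor
  · intro h l
    obtain ⟨c, hc⟩ := h l.castSucc
    rw [img1] at hc
    exact ⟨c, by simpa using hc⟩
  · intro h l
    induction l using Fin.lastCases with
    | last => exact ⟨0, by rw [img_univ]; simp⟩
    | cast l =>
      obtain ⟨c, hc⟩ := h l
      exact ⟨c, by rw [img1]; simpa using hc⟩

lemma conn_ext2 (σ : Equiv.Perm (Fin m)) : IsConnectedPerm (ext2 σ) ↔ IsConnectedPerm σ := by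
  constructor
  · intro h l
    obtain ⟨c, hc⟩ := h l.castSucc
    rw [img2] at hc
    have hc1 : 1 ≤ c := by
      have hcm : c ∈ Finset.Ico c (c + (l.castSucc : ℕ) + 1) := by
        rw [Finset.mem_Ico]; omega
      rw [← hc] at hcm
      obtain ⟨x, -, hx⟩ := Finset.mem_image.mp hcm
      omega
    refine ⟨c - 1, ?_⟩
    apply Finset.image_injective (f := fun n : ℕ => n + 1) (fun a b h => by simpa using h)
    rw [hc, Finset.image_add_right_Ico]
    have : (l.castSucc : ℕ) = (l : ℕ) := rfl
    rw [this] at *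
    congr 1 <;> omega
  · intro h l
    induction l using Fin.lastCases with
    | last => exact ⟨0, by rw [img_univ]; simp⟩
    | cast l =>
      obtain ⟨c, hc⟩ := h l
      refine ⟨c + 1, ?_⟩
      rw [img2, hc, Finset.image_add_right_Ico]
      have : (l.castSucc : ℕ) = (l : ℕ) := rfl
      rw [this]
      congr 1
      omega

lemma surj1 (π : Equiv.Perm (Fin (m+1))) (h : π (Fin.last m) = Fin.last m) :
    ∃ σ : Equiv.Perm (Fin m), ∀ i : Fin m, π i.castSucc = (σ i).castSucc ∧
      π.symm i.castSucc = (σ.symm i).castSucc := by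
  have h1 : ∀ i : Fin m, (π i.castSucc : ℕ) < m := by
    intro i
    have hne : π i.castSucc ≠ Fin.last m := by
      rw [← h]
      exact fun hc => (Fin.castSucc_lt_last i).ne (π.injective hc)
    have := (π i.castSucc).isLt
    have : (π i.castSucc : ℕ) ≠ m := fun hc => hne (Fin.ext hc)
    omega
  have hsymm : π.symm (Fin.last m) = Fin.last m := by
    rw [Equiv.symm_apply_eq, h]
  have h2 : ∀ i : Fin m, (π.symm i.castSucc : ℕ) < m := by
    intro i
    have hne : π.symm i.castSucc ≠ Fin.last m := by
      rw [← hsymm]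
      exact fun hc => (Fin.castSucc_lt_last i).ne (π.symm.injective hc)
    have := (π.symm i.castSucc).isLt
    have : (π.symm i.castSucc : ℕ) ≠ m := fun hc => hne (Fin.ext hc)
    omega
  refine ⟨⟨fun i => ⟨π i.castSucc, h1 i⟩, fun i => ⟨π.symm i.castSucc, h2 i⟩, ?_, ?_⟩,
    fun i => ⟨?_, ?_⟩⟩
  · intro i
    apply Fin.ext
    show (π.symm (Fin.castSucc ⟨(π i.castSucc : ℕ), _⟩) : ℕ) = (i : ℕ)
    have : Fin.castSucc (⟨(π i.castSucc : ℕ), h1 i⟩ : Fin m) = π i.castSucc := Fin.ext rfl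
    rw [this, Equiv.symm_apply_apply]
    rfl
  · intro i
    apply Fin.ext
    show (π (Fin.castSucc ⟨(π.symm i.castSucc : ℕ), _⟩) : ℕ) = (i : ℕ)
    have : Fin.castSucc (⟨(π.symm i.castSucc : ℕ), h2 i⟩ : Fin m) = π.symm i.castSucc :=
      Fin.ext rfl
    rw [this, Equiv.apply_symm_apply]
    rfl
  · exact (Fin.ext rfl).symm
  · exact (Fin.ext rfl).symm

lemma surj2 (π : Equiv.Perm (Fin (m+1))) (h : π (Fin.last m) = 0) :
    ∃ σ : Equiv.Perm (Fin m), ∀ i : Fin m, π i.castSucc = (σ i).succ ∧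
      π.symm i.succ = (σ.symm i).castSucc := by
  have h1 : ∀ i : Fin m, (π i.castSucc : ℕ) ≠ 0 := by
    intro i hc
    have : π i.castSucc = π (Fin.last m) := by rw [h]; exact Fin.ext hc
    exact (Fin.castSucc_lt_last i).ne (π.injective this)
  have h1' : ∀ i : Fin m, (π i.castSucc : ℕ) - 1 < m := by
    intro i; have := (π i.castSucc).isLt; have := h1 i; omega
  have hsymm : π.symm 0 = Fin.last m := by rw [Equiv.symm_apply_eq, h]
  have h2 : ∀ i : Fin m, (π.symm i.succ : ℕ) < m := by
    intro i
    have hne : π.symm i.succ ≠ Fin.last m := by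
      rw [← hsymm]
      intro hc
      exact (Fin.succ_ne_zero i) (π.symm.injective hc)
    have := (π.symm i.succ).isLt
    have : (π.symm i.succ : ℕ) ≠ m := fun hc => hne (Fin.ext hc)
    omega
  refine ⟨⟨fun i => ⟨(π i.castSucc : ℕ) - 1, h1' i⟩, fun i => ⟨π.symm i.succ, h2 i⟩, ?_, ?_⟩,
    fun i => ⟨?_, ?_⟩⟩
  · intro i
    apply Fin.ext
    show (π.symm (Fin.succ ⟨(π i.castSucc : ℕ) - 1, _⟩) : ℕ) = (i : ℕ)
    have : Fin.succ (⟨(π i.castSucc : ℕ) - 1, h1' i⟩ : Fin m) = π i.castSucc := by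
      apply Fin.ext; show (π i.castSucc : ℕ) - 1 + 1 = _; have := h1 i; omega
    rw [this, Equiv.symm_apply_apply]
    rfl
  · intro i
    apply Fin.ext
    show (π (Fin.castSucc ⟨(π.symm i.succ : ℕ), _⟩) : ℕ) - 1 = (i : ℕ)
    have : Fin.castSucc (⟨(π.symm i.succ : ℕ), h2 i⟩ : Fin m) = π.symm i.succ := Fin.ext rfl
    rw [this, Equiv.apply_symm_apply]
    simp [Fin.val_succ]
  · apply Fin.ext
    show (π i.castSucc : ℕ) = (π i.castSucc : ℕ) - 1 + 1
    have := h1 i; omega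
  · exact (Fin.ext rfl).symm

lemma last_cases (hm : 0 < m) (π : Equiv.Perm (Fin (m+1))) (hπ : IsConnectedPerm π) :
    π (Fin.last m) = Fin.last m ∨ π (Fin.last m) = 0 := by
  obtain ⟨c, hc⟩ := hπ ⟨m - 1, by omega⟩
  have hmem : ∀ n ∈ Finset.Ico c (c + (m - 1) + 1), ∃ i : Fin (m+1), (i : ℕ) ≤ m - 1 ∧ (π i : ℕ) = n := by
    intro n hn
    rw [← hc] at hn
    simp only [Finset.mem_image, Finset.mem_filter, Finset.mem_univ, true_and] at hn
    obtain ⟨i, hi, hv⟩ := hn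
    exact ⟨i, Fin.le_def.mp hi, hv⟩
  have hub : c + (m - 1) < m + 1 := by
    obtain ⟨i, _, hv⟩ := hmem (c + (m-1)) (by simp)
    have := (π i).isLt; omega
  have hlast_notin : (π (Fin.last m) : ℕ) ∉ Finset.Ico c (c + (m - 1) + 1) := by
    intro hn
    obtain ⟨i, hi, hv⟩ := hmem _ hn
    have : i = Fin.last m := π.injective (Fin.ext hv)
    rw [this] at hi
    simp [Fin.last] at hi
    omega
  simp only [Finset.mem_Ico, not_and, not_lt] at hlast_notin
  have hlt := (π (Fin.last m)).isLt
  have : (π (Fin.last m) : ℕ) = m ∨ (π (Fin.last m) : ℕ) = 0 := by omega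
  rcases this with h | h
  · left; exact Fin.ext h
  · right; exact Fin.ext h

lemma ext1_injective : Function.Injective (ext1 (m := m)) := by
  intro σ τ h
  ext i
  have := congrArg (fun π : Equiv.Perm (Fin (m+1)) => π i.castSucc) h
  simp only [ext1_apply_castSucc] at this
  exact congrArg Fin.val (Fin.castSucc_injective _ this)

lemma ext2_injective : Function.Injective (ext2 (m := m)) := by
  intro σ τ h
  ext i
  have := congrArg (fun π : Equiv.Perm (Fin (m+1)) => π i.castSucc) h
  simp only [ext2_apply_castSucc] at this
  exact congrArg Fin.val (Fin.succ_injective _ this)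

lemma eq_ext1 (π : Equiv.Perm (Fin (m+1))) (h : π (Fin.last m) = Fin.last m) :
    ∃ σ, ext1 σ = π := by
  obtain ⟨σ, hσ⟩ := surj1 π h
  refine ⟨σ, Equiv.ext fun i => ?_⟩
  induction i using Fin.lastCases with
  | last => rw [ext1_apply_last, h]
  | cast i => rw [ext1_apply_castSucc, (hσ i).1]

lemma eq_ext2 (π : Equiv.Perm (Fin (m+1))) (h : π (Fin.last m) = 0) :
    ∃ σ, ext2 σ = π := by
  obtain ⟨σ, hσ⟩ := surj2 π h
  refine ⟨σ, Equiv.ext fun i => ?_⟩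
  induction i using Fin.lastCases with
  | last => rw [ext2_apply_last, h]
  | cast i => rw [ext2_apply_castSucc, (hσ i).1]

lemma ic_concat {R : Type*} [Ring R] (x : R) (xs : List R) (a : R) :
    iteratedCommutator ((x :: xs).concat a) =
      iteratedCommutator (x :: xs) * a - a * iteratedCommutator (x :: xs) := by
  show iteratedCommutator (x :: xs.concat a) = _
  show (xs.concat a).foldl _ x = _
  rw [List.concat_eq_append, List.foldl_append]
  rfl

theorem aux {R : Type*} [Ring R] : ∀ (n : ℕ) (X : Fin (n+1) → R),
    (∑ π : Equiv.Perm (Fin (n+1)),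
      if IsConnectedPerm π then
        ((-1 : R) ^ (π 0 : ℕ)) * (List.ofFn fun i => X (π.symm i)).prod
      else 0) = iteratedCommutator (List.ofFn X) := by
  intro n
  induction n with
  | zero =>
    intro X
    have huniq : ∀ π : Equiv.Perm (Fin 1), π = 1 := fun π => Equiv.ext fun i => Subsingleton.elim _ _
    have huniv : (Finset.univ : Finset (Equiv.Perm (Fin 1))) = {1} := by
      ext π; simp [huniq π]
    rw [huniv, Finset.sum_singleton]
    have hconn : IsConnectedPerm (1 : Equiv.Perm (Fin 1)) := by
      intro l
      refine ⟨0, ?_⟩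
      have : l = 0 := Subsingleton.elim _ _
      subst this
      decide
    rw [if_pos hconn]
    simp [iteratedCommutator, List.ofFn_succ]; rfl
  | succ n ih =>
    intro X
    set X' : Fin (n+1) → R := fun i => X i.castSucc with hX'
    have h0 : (0 : Fin (n+2)) = Fin.castSucc (0 : Fin (n+1)) := by simp
    set F : Equiv.Perm (Fin (n+2)) → R := fun π =>
      if IsConnectedPerm π then
        ((-1 : R) ^ (π 0 : ℕ)) * (List.ofFn fun i => X (π.symm i)).prod
      else 0 with hF
    set A : Equiv.Perm (Fin (n+1)) → R := fun σ =>
      if IsConnectedPerm σ then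
        ((-1 : R) ^ (σ 0 : ℕ)) * (List.ofFn fun i => X' (σ.symm i)).prod
      else 0 with hA
    have key1 : ∀ σ : Equiv.Perm (Fin (n+1)), F (ext1 σ) = A σ * X (Fin.last (n+1)) := by
      intro σ
      by_cases h : IsConnectedPerm σ
      · have h1 : IsConnectedPerm (ext1 σ) := (conn_ext1 σ).mpr h
        rw [hF, hA]
        simp only [if_pos h, if_pos h1]
        have hsign : ((ext1 σ) 0 : ℕ) = (σ 0 : ℕ) := by
          rw [h0, ext1_apply_castSucc]; simp
        have hlist : (List.ofFn fun j : Fin (n+2) => X ((ext1 σ).symm j)) =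
            (List.ofFn fun j : Fin (n+1) => X' (σ.symm j)).concat (X (Fin.last (n+1))) := by
          rw [List.ofFn_succ']
          simp [hX']
        rw [hsign, hlist, List.prod_concat, mul_assoc]
      · have h1 : ¬ IsConnectedPerm (ext1 σ) := fun hc => h ((conn_ext1 σ).mp hc)
        rw [hF, hA]
        simp [if_neg h, if_neg h1]
    have key2 : ∀ σ : Equiv.Perm (Fin (n+1)), F (ext2 σ) = -(X (Fin.last (n+1)) * A σ) := by
      intro σ
      by_cases h : IsConnectedPerm σ
      · have h1 : IsConnectedPerm (ext2 σ) := (conn_ext2 σ).mpr h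
        rw [hF, hA]
        simp only [if_pos h, if_pos h1]
        have hsign : ((ext2 σ) 0 : ℕ) = (σ 0 : ℕ) + 1 := by
          rw [h0, ext2_apply_castSucc]; simp
        have hlist : (List.ofFn fun j : Fin (n+2) => X ((ext2 σ).symm j)) =
            X (Fin.last (n+1)) :: (List.ofFn fun j : Fin (n+1) => X' (σ.symm j)) := by
          rw [List.ofFn_succ]
          simp [hX']
        rw [hsign, hlist, List.prod_cons, pow_succ]
        have hcomm : ((-1 : R) ^ (σ 0 : ℕ)) * X (Fin.last (n+1)) =
            X (Fin.last (n+1)) * ((-1 : R) ^ (σ 0 : ℕ)) :=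
          ((Commute.neg_one_left (X (Fin.last (n+1)))).pow_left _).eq
        calc ((-1:R) ^ (σ 0 : ℕ) * -1) * (X (Fin.last (n+1)) * (List.ofFn fun j : Fin (n+1) => X' (σ.symm j)).prod)
            = -(((-1:R) ^ (σ 0 : ℕ) * X (Fin.last (n+1))) * (List.ofFn fun j : Fin (n+1) => X' (σ.symm j)).prod) := by
              rw [mul_neg_one, neg_mul, mul_assoc]
          _ = -(X (Fin.last (n+1)) * (((-1:R) ^ (σ 0 : ℕ)) * (List.ofFn fun j : Fin (n+1) => X' (σ.symm j)).prod)) := by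
              rw [hcomm, mul_assoc]
      · have h1 : ¬ IsConnectedPerm (ext2 σ) := fun hc => h ((conn_ext2 σ).mp hc)
        rw [hF, hA]
        simp [if_neg h, if_neg h1]
    -- split the sum
    have hsplit : (∑ π : Equiv.Perm (Fin (n+2)), F π) =
        (∑ σ : Equiv.Perm (Fin (n+1)), F (ext1 σ)) + (∑ σ : Equiv.Perm (Fin (n+1)), F (ext2 σ)) := by
      have hT1 : ∀ π ∈ (Finset.univ.image (ext1 (m := n+1))), π (Fin.last (n+1)) = Fin.last (n+1) := by
        intro π hπ
        obtain ⟨σ, -, rfl⟩ := Finset.mem_image.mp hπ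
        exact ext1_apply_last σ
      have hT2 : ∀ π ∈ (Finset.univ.image (ext2 (m := n+1))), π (Fin.last (n+1)) = 0 := by
        intro π hπ
        obtain ⟨σ, -, rfl⟩ := Finset.mem_image.mp hπ
        exact ext2_apply_last σ
      have hdisj : Disjoint (Finset.univ.image (ext1 (m := n+1)))
          (Finset.univ.image (ext2 (m := n+1))) := by
        rw [Finset.disjoint_left]
        intro π h1 h2
        have := (hT1 π h1).symm.trans (hT2 π h2)
        exact absurd (congrArg Fin.val this) (by simp [Fin.last])
      have hzero : ∀ π ∈ Finset.univ,
          π ∉ (Finset.univ.image (ext1 (m := n+1))) ∪ (Finset.univ.image (ext2 (m := n+1))) →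
          F π = 0 := by
        intro π _ hπ
        rw [hF]
        simp only
        rw [if_neg]
        intro hconn
        rcases last_cases (by omega) π hconn with h | h
        · obtain ⟨σ, rfl⟩ := eq_ext1 π h
          exact hπ (Finset.mem_union_left _ (Finset.mem_image_of_mem _ (Finset.mem_univ σ)))
        · obtain ⟨σ, rfl⟩ := eq_ext2 π h
          exact hπ (Finset.mem_union_right _ (Finset.mem_image_of_mem _ (Finset.mem_univ σ)))
      rw [← Finset.sum_subset (Finset.subset_univ _) hzero, Finset.sum_union hdisj,
        Finset.sum_image (fun a _ b _ h => ext1_injective h),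
        Finset.sum_image (fun a _ b _ h => ext2_injective h)]
    rw [hsplit]
    simp only [key1, key2]
    rw [← Finset.sum_mul, Finset.sum_neg_distrib, ← Finset.mul_sum]
    have hIH : (∑ σ : Equiv.Perm (Fin (n+1)), A σ) = iteratedCommutator (List.ofFn X') := ih X'
    rw [hIH]
    rw [List.ofFn_succ' X]
    obtain ⟨x, xs, hxs⟩ : ∃ x xs, (List.ofFn fun i : Fin (n+1) => X i.castSucc) = x :: xs :=
      ⟨_, _, List.ofFn_succ⟩
    rw [show (List.ofFn fun i => X i.castSucc) = List.ofFn X' from rfl] at hxs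
    rw [hxs, ic_concat, sub_eq_add_neg]

end Helpers

/-- For elements `X₁,…,X_s` of an associative ring,
`Σ_{s₁=1}^{s} Σ_{π ∈ Φ_{s s₁}} (-1)^{s₁-1} X_{π⁻¹(1)} ⋯ X_{π⁻¹(s)}` equals the
left-normed iterated commutator `[⋯[[X₁,X₂],X₃],…,X_s]`; here `Φ_{s s₁}` is the set
of connected permutations with `π(1) = s₁`. -/
theorem stmt14 (R : Type*) [Ring R] (s : ℕ) (hs : 0 < s) (X : Fin s → R) :
    (∑ π : Equiv.Perm (Fin s),
      if IsConnectedPerm π then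
        ((-1 : R) ^ (π ⟨0, hs⟩ : ℕ)) * (List.ofFn fun i => X (π.symm i)).prod
      else 0) =
    iteratedCommutator (List.ofFn X) := by
  obtain ⟨n, rfl⟩ := Nat.exists_eq_succ_of_ne_zero (Nat.pos_iff_ne_zero.mp hs)
  simp only [Fin.mk_zero]
  exact aux n X
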